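/- Fix an integer a ≥ 2 and let p/q ∈ (0, a) be a rational number whose canonical continued fraction expansion is [a_0; a_1, …, a_n, a] with a_i ≤ a − 1 for all i ≤ n. Then r_a(p/q) = [a_0; a_1, …, a_n] ≠ p/q, and the set {x ∈ [0, a) : r_a(x) = p/q} is the half-open interval whose excluded endpoint is p/q and whose included endpoint is [a_0; a_1, …, a_n, a − 1, 1, a]. (Such p/q are the transient rationals: their transit zone lies entirely on one side of p/q.) -/

import Mathlib

/-- One step of the Gauss continued-fraction algorithm (returns `0` upon termination). -/
noncomputable def cfStep (y : ℝ) : ℝ := if Int.fract y = 0 then 0 else (Int.fract y)⁻¹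

/-- Iterates of the Gauss map used to compute the canonical continued fraction of `x`. -/
noncomputable def cfIter (x : ℝ) : ℕ → ℝ
  | 0 => x
  | n + 1 => cfStep (cfIter x n)

/-- The `n`-th partial quotient of the canonical continued fraction expansion of `x`
(by convention it is `0` past the end of a finite expansion). -/
noncomputable def pquot (x : ℝ) (n : ℕ) : ℤ := ⌊cfIter x n⌋

/-- Value of a finite continued fraction `[a₀; a₁, …, aₙ]`. -/
noncomputable def cfEval : List ℤ → ℝ
  | [] => 0
  | [a] => (a : ℝ)
  | a :: l => (a : ℝ) + (cfEval l)⁻¹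

/-- The canonical continued fraction expansion of `x` is exactly `[A 0; A 1, …, A n]`. -/
def IsCanonCF (x : ℝ) (A : ℕ → ℤ) (n : ℕ) : Prop :=
  (∀ i ≤ n, pquot x i = A i) ∧ Int.fract (cfIter x n) = 0 ∧ ∀ i < n, Int.fract (cfIter x i) ≠ 0

/-- The `n`-th convergent `pₙ/qₙ = [x₀; x₁, …, xₙ]` of `x`. -/
noncomputable def cfConv (x : ℝ) (n : ℕ) : ℝ := cfEval ((List.range (n + 1)).map (pquot x))

open scoped Classical in
/-- The resolution map `r_a`: truncate the canonical continued fraction expansion just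
before the first partial quotient `xᵢ` (`i ≥ 1`) with `xᵢ ≥ a`; identity otherwise. -/
noncomputable def ra (a : ℕ) (x : ℝ) : ℝ :=
  if h : ∃ i, 1 ≤ i ∧ (a : ℤ) ≤ pquot x i then
    cfEval ((List.range (Nat.find h)).map (pquot x))
  else x

/-- The locking zone `Z_a(r) = {x ∈ [0, a) : r_a(x) = r}`. -/
noncomputable def lockZone (a : ℕ) (r : ℝ) : Set ℝ :=
  {x | x ∈ Set.Ico (0 : ℝ) (a : ℝ) ∧ ra a x = r}

/-- Right boundary `ν⁺` of a locking zone. -/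
noncomputable def nuPlus (a : ℕ) (r : ℝ) : ℝ := sSup (lockZone a r)

/-- Left boundary `ν⁻` of a locking zone. -/
noncomputable def nuMinus (a : ℕ) (r : ℝ) : ℝ := sInf (lockZone a r)

noncomputable def cfTail : List ℤ → ℝ → ℝ
  | [], t => t
  | a :: l, t => (a : ℝ) + (cfTail l t)⁻¹

lemma cfIter_succ' (x : ℝ) (n : ℕ) : cfIter x (n + 1) = cfIter (cfStep x) n := by
  induction n with
  | zero => rfl
  | succ n ih => show cfStep _ = cfStep _; rw [ih]

lemma peel_floor (b : ℤ) (z : ℝ) (hz : 1 < z) : ⌊(b : ℝ) + z⁻¹⌋ = b := by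
  have h0 : (0:ℝ) < z⁻¹ := by positivity
  have h1 : z⁻¹ < 1 := by
    rw [inv_lt_one_iff₀]; right; exact hz
  rw [add_comm, Int.floor_add_intCast]
  rw [Int.floor_eq_zero_iff.2 ⟨le_of_lt h0, h1⟩]; ring

lemma peel_fract (b : ℤ) (z : ℝ) (hz : 1 < z) : Int.fract ((b : ℝ) + z⁻¹) = z⁻¹ := by
  have := peel_floor b z hz
  rw [Int.fract, this]; ring

lemma peel_step (b : ℤ) (z : ℝ) (hz : 1 < z) : cfStep ((b : ℝ) + z⁻¹) = z := by
  rw [cfStep, peel_fract b z hz, if_neg (by positivity), inv_inv]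

lemma cfTail_ge_one {t : ℝ} (ht : 1 ≤ t) : ∀ {l : List ℤ}, (∀ b ∈ l, 1 ≤ b) → 1 ≤ cfTail l t
  | [], _ => ht
  | b :: l, h => by
    have hb : (1:ℝ) ≤ b := by exact_mod_cast h b List.mem_cons_self
    have hl : 1 ≤ cfTail l t := cfTail_ge_one ht (fun c hc => h c (List.mem_cons_of_mem _ hc))
    have : (0:ℝ) < (cfTail l t)⁻¹ := by positivity
    show 1 ≤ (b:ℝ) + (cfTail l t)⁻¹
    linarith

lemma cfTail_gt_one {t : ℝ} (ht : 1 < t) : ∀ {l : List ℤ}, (∀ b ∈ l, 1 ≤ b) → 1 < cfTail l t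
  | [], _ => ht
  | b :: l, h => by
    have hb : (1:ℝ) ≤ b := by exact_mod_cast h b List.mem_cons_self
    have hl : 1 ≤ cfTail l t := cfTail_ge_one (le_of_lt ht) (fun c hc => h c (List.mem_cons_of_mem _ hc))
    have : (0:ℝ) < (cfTail l t)⁻¹ := by positivity
    show 1 < (b:ℝ) + (cfTail l t)⁻¹
    linarith

lemma cfTail_append (m : ℤ) (t : ℝ) : ∀ (l : List ℤ), cfTail (l ++ [m]) t = cfTail l ((m : ℝ) + t⁻¹)
  | [] => rfl
  | b :: l => by
    show (b:ℝ) + (cfTail (l ++ [m]) t)⁻¹ = (b:ℝ) + (cfTail l ((m:ℝ) + t⁻¹))⁻¹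
    rw [cfTail_append m t l]

lemma cfEval_append (m : ℤ) : ∀ (l : List ℤ), cfEval (l ++ [m]) = cfTail l (m : ℝ)
  | [] => rfl
  | b :: l => by
    cases l with
    | nil => show cfEval [b, m] = (b:ℝ) + ((m:ℝ))⁻¹; simp [cfEval, cfTail]
    | cons c l' =>
      show cfEval (b :: ((c :: l') ++ [m])) = (b:ℝ) + (cfTail (c :: l') (m:ℝ))⁻¹
      rw [← cfEval_append m (c :: l')]
      simp [cfEval]

lemma pquot_succ (y : ℝ) (i : ℕ) : pquot y (i + 1) = pquot (cfStep y) i := by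
  rw [pquot, pquot, cfIter_succ']

/-- Forward lemma: reading off the partial quotients of `cfTail l t`. -/
lemma forward {t : ℝ} (ht : 1 < t) :
    ∀ (l : List ℤ), (∀ b ∈ l.tail, 1 ≤ b) →
      ((List.range l.length).map (pquot (cfTail l t)) = l) ∧
      cfIter (cfTail l t) l.length = t ∧
      ∀ i < l.length, Int.fract (cfIter (cfTail l t) i) ≠ 0
  | [] , _ => by simp [cfIter, cfTail]
  | b :: l, h => by
    have hl : ∀ c ∈ l, 1 ≤ c := h
    have hz : 1 < cfTail l t := cfTail_gt_one ht hl
    have hy : cfTail (b :: l) t = (b:ℝ) + (cfTail l t)⁻¹ := rfl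
    have hstep : cfStep (cfTail (b :: l) t) = cfTail l t := by rw [hy]; exact peel_step b _ hz
    have hfr : Int.fract (cfTail (b :: l) t) ≠ 0 := by
      rw [hy, peel_fract b _ hz]
      have : (0:ℝ) < (cfTail l t)⁻¹ := by positivity
      exact ne_of_gt this
    obtain ⟨ih1, ih2, ih3⟩ := forward ht l (fun c hc => hl c (List.mem_of_mem_tail hc))
    refine ⟨?_, ?_, ?_⟩
    · show (List.range (l.length + 1)).map (pquot (cfTail (b :: l) t)) = b :: l
      rw [List.range_succ_eq_map, List.map_cons, List.map_map]
      congr 1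
      · show pquot (cfTail (b :: l) t) 0 = b
        rw [pquot]; show ⌊cfTail (b :: l) t⌋ = b
        rw [hy]; exact peel_floor b _ hz
      · rw [show (pquot (cfTail (b :: l) t)) ∘ Nat.succ = pquot (cfStep (cfTail (b :: l) t)) by
          funext i; exact pquot_succ _ i, hstep]
        exact ih1
    · show cfIter (cfTail (b :: l) t) (l.length + 1) = t
      rw [cfIter_succ', hstep]; exact ih2
    · intro i hi
      cases i with
      | zero => exact hfr
      | succ i =>
        rw [cfIter_succ', hstep]
        exact ih3 i (by simpa using hi)

/-- Reconstruction from the Gauss iterates. -/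
lemma reconstruct : ∀ (k : ℕ) (y : ℝ), (∀ i < k, Int.fract (cfIter y i) ≠ 0) →
    cfTail ((List.range k).map (pquot y)) (cfIter y k) = y
  | 0, y, _ => rfl
  | k + 1, y, h => by
    have h0 : Int.fract y ≠ 0 := h 0 (Nat.succ_pos k)
    have hstep : cfStep y = (Int.fract y)⁻¹ := if_neg h0
    have ih := reconstruct k (cfStep y) (fun i hi => by
      rw [← cfIter_succ']; exact h (i+1) (by omega))
    rw [List.range_succ_eq_map, List.map_cons, List.map_map,
      show (pquot y) ∘ Nat.succ = pquot (cfStep y) from funext fun i => pquot_succ y i,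
      cfIter_succ']
    show (↑(pquot y 0) : ℝ) + (cfTail _ _)⁻¹ = y
    rw [ih, hstep, inv_inv, pquot]
    show ((⌊cfIter y 0⌋ : ℝ)) + Int.fract y = y
    show ((⌊y⌋ : ℝ)) + Int.fract y = y
    rw [Int.fract]; ring

/-- Strict monotonicity with alternating direction. -/
lemma cfTail_mono (l : List ℤ) (h : ∀ b ∈ l.tail, 1 ≤ b) : ∀ {s t : ℝ}, 1 ≤ s → 1 ≤ t → s < t →
    (Even l.length → cfTail l s < cfTail l t) ∧ (¬ Even l.length → cfTail l t < cfTail l s) := by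
  induction l with
  | nil =>
    intro s t _ _ hst
    exact ⟨fun _ => hst, fun hc => absurd (⟨0, rfl⟩ : Even (0:ℕ)) (by simpa using hc)⟩
  | cons b l ih =>
    intro s t hs ht hst
    have hl : ∀ c ∈ l, 1 ≤ c := h
    have hls : 1 ≤ cfTail l s := cfTail_ge_one hs hl
    have hlt : 1 ≤ cfTail l t := cfTail_ge_one ht hl
    have ihh := ih (fun c hc => hl c (List.mem_of_mem_tail hc)) hs ht hst
    constructor
    · intro he
      have hodd : ¬ Even l.length := by simpa [Nat.even_add_one] using he
      have h2 := ihh.2 hodd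
      show (b:ℝ) + (cfTail l s)⁻¹ < (b:ℝ) + (cfTail l t)⁻¹
      have : (cfTail l s)⁻¹ < (cfTail l t)⁻¹ := inv_strictAnti₀ (by linarith) h2
      linarith
    · intro he
      have heven : Even l.length := by simpa [Nat.even_add_one, not_not] using he
      have h1 := ihh.1 heven
      show (b:ℝ) + (cfTail l t)⁻¹ < (b:ℝ) + (cfTail l s)⁻¹
      have : (cfTail l t)⁻¹ < (cfTail l s)⁻¹ := inv_strictAnti₀ (by linarith) h1
      linarith

/-- Continuity in the tail variable. -/
lemma cfTail_continuousOn : ∀ (l : List ℤ), (∀ b ∈ l.tail, 1 ≤ b) →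
    ContinuousOn (fun s => cfTail l s) (Set.Ici (1:ℝ))
  | [], _ => continuousOn_id
  | b :: l, h => by
    have hl : ∀ c ∈ l, 1 ≤ c := h
    have ih := cfTail_continuousOn l (fun c hc => hl c (List.mem_of_mem_tail hc))
    show ContinuousOn (fun s => (b:ℝ) + (cfTail l s)⁻¹) (Set.Ici (1:ℝ))
    exact continuousOn_const.add (ih.inv₀ (fun s hs =>
      ne_of_gt (lt_of_lt_of_le one_pos (cfTail_ge_one hs hl))))

lemma cfEval_cons (b : ℤ) (l : List ℤ) (hl : l ≠ []) :
    cfEval (b :: l) = (b : ℝ) + (cfEval l)⁻¹ := by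
  cases l with
  | nil => exact absurd rfl hl
  | cons c s => simp [cfEval]

lemma cfEval_ge_one : ∀ (l : List ℤ), l ≠ [] → (∀ b ∈ l, 1 ≤ b) → 1 ≤ cfEval l
  | [], h, _ => absurd rfl h
  | [b], _, h => by
    show (1:ℝ) ≤ (b:ℝ); exact_mod_cast h b (by simp)
  | b :: c :: s, _, h => by
    have h1 : 1 ≤ cfEval (c :: s) := cfEval_ge_one (c :: s) (by simp)
      (fun d hd => h d (List.mem_cons_of_mem _ hd))
    have hb : (1:ℝ) ≤ (b:ℝ) := by exact_mod_cast h b (by simp)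
    have : (0:ℝ) < (cfEval (c :: s))⁻¹ := by positivity
    rw [cfEval_cons b _ (by simp)]
    linarith

lemma cfEval_eq_one : ∀ (l : List ℤ), l ≠ [] → (∀ b ∈ l, 1 ≤ b) → cfEval l = 1 → l = [1]
  | [], h, _, _ => absurd rfl h
  | [b], _, h, hv => by
    have h1 : ((b:ℤ):ℝ) = ((1:ℤ):ℝ) := by rw [show ((b:ℤ):ℝ) = cfEval [b] from rfl, hv]; norm_num
    have : b = 1 := by exact_mod_cast h1
    rw [this]
  | b :: c :: s, _, h, hv => by
    exfalso
    have h1 : 1 ≤ cfEval (c :: s) := cfEval_ge_one (c :: s) (by simp)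
      (fun d hd => h d (List.mem_cons_of_mem _ hd))
    have hb : (1:ℝ) ≤ (b:ℝ) := by exact_mod_cast h b (by simp)
    have hpos : (0:ℝ) < (cfEval (c :: s))⁻¹ := by positivity
    rw [cfEval_cons b _ (by simp)] at hv
    linarith

/-- Uniqueness of finite continued fraction representations (up to the standard split). -/
lemma cf_uniq : ∀ (l₁ l₂ : List ℤ), l₁ ≠ [] → l₂ ≠ [] →
    (∀ b ∈ l₁.tail, 1 ≤ b) → (∀ b ∈ l₂.tail, 1 ≤ b) → cfEval l₁ = cfEval l₂ →
    l₁ = l₂ ∨ ∃ (l : List ℤ) (m : ℤ),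
      (l₁ = l ++ [m] ∧ l₂ = l ++ [m - 1, 1]) ∨ (l₂ = l ++ [m] ∧ l₁ = l ++ [m - 1, 1])
  | [], _, h, _, _, _, _ => absurd rfl h
  | _, [], _, h, _, _, _ => absurd rfl h
  | b₁ :: r₁, b₂ :: r₂, _, _, h₁, h₂, hv => by
    have key : ∀ (b : ℤ) (r : List ℤ), r ≠ [] → (∀ c ∈ r, 1 ≤ c) → r ≠ [1] →
        ⌊cfEval (b :: r)⌋ = b ∧ Int.fract (cfEval (b :: r)) = (cfEval r)⁻¹ ∧
          1 < cfEval r := by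
      intro b r hr hr1 hrne
      have hge : 1 ≤ cfEval r := cfEval_ge_one r hr hr1
      have hgt : 1 < cfEval r :=
        lt_of_le_of_ne hge (fun he => hrne (cfEval_eq_one r hr hr1 he.symm))
      have h0 : (0:ℝ) < (cfEval r)⁻¹ := by positivity
      have h1 : (cfEval r)⁻¹ < 1 := by rw [inv_lt_one_iff₀]; right; exact hgt
      rw [cfEval_cons b r hr]
      have hfl : ⌊(b:ℝ) + (cfEval r)⁻¹⌋ = b := by
        rw [add_comm, Int.floor_add_intCast, Int.floor_eq_zero_iff.2 ⟨le_of_lt h0, h1⟩]; ring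
      exact ⟨hfl, by rw [Int.fract, hfl]; ring, hgt⟩
    rcases eq_or_ne r₁ [] with hr₁ | hr₁
    · rcases eq_or_ne r₂ [] with hr₂ | hr₂
      · -- both singletons
        subst hr₁; subst hr₂
        left
        have : ((b₁:ℤ):ℝ) = ((b₂:ℤ):ℝ) := hv
        have : b₁ = b₂ := by exact_mod_cast this
        rw [this]
      · -- l₁ = [b₁], value integer
        subst hr₁
        rcases eq_or_ne r₂ [1] with hr2 | hr2
        · subst hr2
          have hv' : (b₁ : ℝ) = (b₂ : ℝ) + 1 := by
            have : cfEval [b₂, 1] = (b₂:ℝ) + 1 := by simp [cfEval]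
            rw [this] at hv; exact hv
          have hb : b₁ = b₂ + 1 := by exact_mod_cast hv'
          right
          exact ⟨[], b₁, Or.inl ⟨rfl, by rw [hb]; simp⟩⟩
        · exfalso
          obtain ⟨hfl, hfr, hgt⟩ := key b₂ r₂ hr₂ h₂ hr2
          have : Int.fract (cfEval (b₂ :: r₂)) = 0 := by
            rw [← hv]; show Int.fract ((b₁:ℤ):ℝ) = 0; exact Int.fract_intCast b₁
          rw [hfr] at this
          have : (0:ℝ) < (cfEval r₂)⁻¹ := by positivity
          simp_all
    · rcases eq_or_ne r₂ [] with hr₂ | hr₂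
      · subst hr₂
        rcases eq_or_ne r₁ [1] with hr1 | hr1
        · subst hr1
          have hv' : (b₂ : ℝ) = (b₁ : ℝ) + 1 := by
            have : cfEval [b₁, 1] = (b₁:ℝ) + 1 := by simp [cfEval]
            rw [this] at hv; exact hv.symm
          have hb : b₂ = b₁ + 1 := by exact_mod_cast hv'
          right
          exact ⟨[], b₂, Or.inr ⟨rfl, by rw [hb]; simp⟩⟩
        · exfalso
          obtain ⟨hfl, hfr, hgt⟩ := key b₁ r₁ hr₁ h₁ hr1
          have : Int.fract (cfEval (b₁ :: r₁)) = 0 := by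
            rw [hv]; show Int.fract ((b₂:ℤ):ℝ) = 0; exact Int.fract_intCast b₂
          rw [hfr] at this
          have : (0:ℝ) < (cfEval r₁)⁻¹ := by positivity
          simp_all
      · -- both rests nonempty
        rcases eq_or_ne r₁ [1] with hr1 | hr1
        · rcases eq_or_ne r₂ [1] with hr2 | hr2
          · subst hr1; subst hr2
            left
            have hv' : (b₁ : ℝ) + 1 = (b₂ : ℝ) + 1 := by
              have e1 : cfEval [b₁, 1] = (b₁:ℝ) + 1 := by simp [cfEval]
              have e2 : cfEval [b₂, 1] = (b₂:ℝ) + 1 := by simp [cfEval]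
              rw [e1, e2] at hv; exact hv
            have : b₁ = b₂ := by exact_mod_cast (by linarith : (b₁:ℝ) = (b₂:ℝ))
            rw [this]
          · exfalso
            subst hr1
            obtain ⟨hfl, hfr, hgt⟩ := key b₂ r₂ hr₂ h₂ hr2
            have he1 : cfEval (b₁ :: [1]) = ((b₁ + 1 : ℤ) : ℝ) := by push_cast; simp [cfEval]
            have : Int.fract (cfEval (b₂ :: r₂)) = 0 := by
              rw [← hv, he1]; exact Int.fract_intCast _
            rw [hfr] at this
            have : (0:ℝ) < (cfEval r₂)⁻¹ := by positivity
            simp_all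
        · rcases eq_or_ne r₂ [1] with hr2 | hr2
          · exfalso
            subst hr2
            obtain ⟨hfl, hfr, hgt⟩ := key b₁ r₁ hr₁ h₁ hr1
            have he2 : cfEval (b₂ :: [1]) = ((b₂ + 1 : ℤ) : ℝ) := by push_cast; simp [cfEval]
            have : Int.fract (cfEval (b₁ :: r₁)) = 0 := by
              rw [hv, he2]; exact Int.fract_intCast _
            rw [hfr] at this
            have : (0:ℝ) < (cfEval r₁)⁻¹ := by positivity
            simp_all
          · obtain ⟨hfl₁, hfr₁, hgt₁⟩ := key b₁ r₁ hr₁ h₁ hr1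
            obtain ⟨hfl₂, hfr₂, hgt₂⟩ := key b₂ r₂ hr₂ h₂ hr2
            have hb : b₁ = b₂ := by rw [← hfl₁, ← hfl₂, hv]
            have hre : cfEval r₁ = cfEval r₂ := by
              have : (cfEval r₁)⁻¹ = (cfEval r₂)⁻¹ := by
                rw [← hfr₁, ← hfr₂, hv]
              exact inv_injective this
            have ih := cf_uniq r₁ r₂ hr₁ hr₂
              (fun c hc => h₁ c (List.mem_of_mem_tail hc))
              (fun c hc => h₂ c (List.mem_of_mem_tail hc)) hre
            rcases ih with heq | ⟨l, m, hsplit⟩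
            · left; rw [hb, heq]
            · right
              refine ⟨b₁ :: l, m, ?_⟩
              rcases hsplit with ⟨e1, e2⟩ | ⟨e1, e2⟩
              · exact Or.inl ⟨by rw [e1]; rfl, by rw [hb, e2]; rfl⟩
              · exact Or.inr ⟨by rw [hb, e1]; rfl, by rw [e2]; rfl⟩


/-- If the canonical expansion of `p/q ∈ (0,a)` is `[a₀; …, aₙ, a]`
with `aᵢ ≤ a - 1` for `i ≤ n`, then `r_a(p/q) = [a₀; …, aₙ] ≠ p/q` and
`{x ∈ [0,a) : r_a(x) = p/q}` is the half-open interval with excluded endpoint `p/q`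
and included endpoint `[a₀; …, aₙ, a-1, 1, a]`. -/
theorem stmt_10 (a : ℕ) (ha : 2 ≤ a) (x : ℚ) (hx0 : 0 < (x : ℝ)) (hxa : (x : ℝ) < a)
    (n : ℕ) (B : ℕ → ℤ) (hB : IsCanonCF (x : ℝ) B (n + 1))
    (hbd : ∀ i ≤ n, B i ≤ (a : ℤ) - 1) (hlast : B (n + 1) = a) :
    let w : ℝ := cfEval ((List.range (n + 1)).map B ++ [(a : ℤ) - 1, 1, (a : ℤ)])
    ra a (x : ℝ) = cfEval ((List.range (n + 1)).map B) ∧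
    ra a (x : ℝ) ≠ (x : ℝ) ∧
    (((x : ℝ) < w ∧ {y | y ∈ Set.Ico (0 : ℝ) (a : ℝ) ∧ ra a y = (x : ℝ)} = Set.Ioc (x : ℝ) w) ∨
     (w < (x : ℝ) ∧ {y | y ∈ Set.Ico (0 : ℝ) (a : ℝ) ∧ ra a y = (x : ℝ)} = Set.Ico w (x : ℝ))) := by
  intro w
  obtain ⟨hBq, hterm, hne⟩ := hB
  set L : List ℤ := (List.range (n+1)).map B with hL
  have ha1 : (1:ℝ) < (a:ℝ) := by exact_mod_cast Nat.lt_of_lt_of_le one_lt_two ha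
  have ha0 : (0:ℝ) < (a:ℝ) := by linarith
  -- partial quotients are positive
  have hIterGt : ∀ i, 1 ≤ i → i ≤ n+1 → 1 < cfIter (x:ℝ) i := by
    intro i h1 h2
    obtain ⟨j, rfl⟩ : ∃ j, i = j + 1 := ⟨i-1, by omega⟩
    have hf := hne j (by omega)
    have hstep : cfIter (x:ℝ) (j+1) = (Int.fract (cfIter (x:ℝ) j))⁻¹ := by
      show cfStep _ = _; rw [cfStep, if_neg hf]
    rw [hstep]
    have h01 : 0 < Int.fract (cfIter (x:ℝ) j) :=
      lt_of_le_of_ne (Int.fract_nonneg _) (Ne.symm hf)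
    exact (one_lt_inv₀ h01).2 (Int.fract_lt_one _)
  have hB1 : ∀ i, 1 ≤ i → i ≤ n+1 → 1 ≤ B i := by
    intro i h1 h2
    rw [← hBq i h2]
    exact Int.le_floor.2 (by exact_mod_cast (hIterGt i h1 h2).le)
  have hB0 : 0 ≤ B 0 := by
    rw [← hBq 0 (by omega)]
    exact Int.le_floor.2 (by rw [show cfIter (x:ℝ) 0 = (x:ℝ) from rfl]; exact_mod_cast hx0.le)
  have hB0a : B 0 ≤ (a:ℤ) - 1 := hbd 0 (by omega)
  -- the (n+1)-st iterate equals a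
  have hxa' : cfIter (x:ℝ) (n+1) = (a:ℝ) := by
    have h1 : cfIter (x:ℝ) (n+1) = (⌊cfIter (x:ℝ) (n+1)⌋ : ℝ) := by
      rw [Int.fract] at hterm; linarith
    rw [h1, show ⌊cfIter (x:ℝ) (n+1)⌋ = pquot (x:ℝ) (n+1) from rfl, hBq (n+1) le_rfl, hlast]
    norm_num
  have hmapL : (List.range (n+1)).map (pquot (x:ℝ)) = L := by
    rw [hL]
    exact List.map_congr_left (fun i hi => hBq i (by have := List.mem_range.1 hi; omega))
  have hxrec : cfTail L (a:ℝ) = (x:ℝ) := by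
    rw [← hmapL, ← hxa']
    exact reconstruct (n+1) (x:ℝ) (fun i hi => hne i hi)
  -- structure of L
  have hLdec : L = B 0 :: ((List.range n).map (fun j => B (j+1))) := by
    rw [hL, List.range_succ_eq_map, List.map_cons, List.map_map]; rfl
  have hLtail1 : ∀ b ∈ (List.range n).map (fun j => B (j+1)), 1 ≤ b := by
    intro b hb
    obtain ⟨j, hj, rfl⟩ := List.mem_map.1 hb
    exact hB1 (j+1) (by omega) (by have := List.mem_range.1 hj; omega)
  have hLtail : ∀ b ∈ L.tail, 1 ≤ b := by rw [hLdec]; exact hLtail1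
  have hLle : ∀ b ∈ L, b ≤ (a:ℤ) - 1 := by
    intro b hb
    rw [hL] at hb
    obtain ⟨j, hj, rfl⟩ := List.mem_map.1 hb
    exact hbd j (by have := List.mem_range.1 hj; omega)
  have hLlen : L.length = n + 1 := by rw [hL]; simp
  -- the list P and its properties
  set P : List ℤ := L ++ [(a:ℤ)-1, 1] with hP
  have hPlen : P.length = n + 3 := by rw [hP, List.length_append, hLlen]; rfl
  have ha2Z : (2:ℤ) ≤ (a:ℤ) := by exact_mod_cast ha
  have hPtail : ∀ b ∈ P.tail, 1 ≤ b := by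
    rw [hP, hLdec]
    intro b hb
    simp only [List.cons_append, List.tail_cons, List.mem_append] at hb
    rcases hb with hb | hb
    · exact hLtail1 b hb
    · simp only [List.mem_cons, List.mem_singleton] at hb
      rcases hb with rfl | hb
      · omega
      · simp at hb; omega
  have hPle : ∀ b ∈ P, b ≤ (a:ℤ) - 1 := by
    rw [hP]
    intro b hb
    rcases List.mem_append.1 hb with hb | hb
    · exact hLle b hb
    · simp only [List.mem_cons, List.mem_singleton] at hb
      rcases hb with rfl | hb
      · omega
      · simp at hb; omega
  -- value identities
  have hPval : ∀ t : ℝ, cfTail P t = cfTail L ((a:ℝ) - 1 + (1 + t⁻¹)⁻¹) := by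
    intro t
    rw [hP, show L ++ [(a:ℤ)-1, 1] = (L ++ [(a:ℤ)-1]) ++ [1] by simp,
      cfTail_append, cfTail_append]
    congr 1
    push_cast
    ring
  have hPeval : cfEval P = (x:ℝ) := by
    rw [hP, show L ++ [(a:ℤ)-1, 1] = (L ++ [(a:ℤ)-1]) ++ [(1:ℤ)] by simp,
      cfEval_append, cfTail_append, ← hxrec]
    congr 1
    push_cast
    ring
  have hwval : w = cfTail P (a:ℝ) := by
    show cfEval (L ++ [(a:ℤ)-1, 1, (a:ℤ)]) = cfTail P (a:ℝ)
    rw [show L ++ [(a:ℤ)-1, 1, (a:ℤ)] = P ++ [(a:ℤ)] by rw [hP]; simp, cfEval_append]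
    norm_num
  -- the endpoints in the s-coordinate
  have hainv : (0:ℝ) < (a:ℝ)⁻¹ := by positivity
  have ha2R : (2:ℝ) ≤ (a:ℝ) := by exact_mod_cast ha
  have hc1 : 1 < (a:ℝ) - 1 + (1 + (a:ℝ)⁻¹)⁻¹ := by
    have : (0:ℝ) < (1 + (a:ℝ)⁻¹)⁻¹ := by positivity
    linarith
  have hcd : (a:ℝ) - 1 + (1 + (a:ℝ)⁻¹)⁻¹ < (a:ℝ) := by
    have h1 : (1 + (a:ℝ)⁻¹)⁻¹ < 1 := by
      rw [inv_lt_one_iff₀]; right; linarith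
    linarith
  have hd1 : (1:ℝ) ≤ (a:ℝ) := ha1.le
  have hwc : w = cfTail L ((a:ℝ) - 1 + (1 + (a:ℝ)⁻¹)⁻¹) := by rw [hwval, hPval]
  have hxd : (x:ℝ) = cfTail L (a:ℝ) := hxrec.symm
  -- sigma facts
  have hsig_mem : ∀ t : ℝ, (a:ℝ) ≤ t →
      ((a:ℝ) - 1 + (1 + t⁻¹)⁻¹) ∈ Set.Ico ((a:ℝ) - 1 + (1 + (a:ℝ)⁻¹)⁻¹) (a:ℝ) := by
    intro t ht
    have ht0 : (0:ℝ) < t := lt_of_lt_of_le ha0 ht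
    have htinv0 : (0:ℝ) < t⁻¹ := by positivity
    constructor
    · have h1 : t⁻¹ ≤ (a:ℝ)⁻¹ := inv_anti₀ ha0 ht
      have h2 : (1 + (a:ℝ)⁻¹)⁻¹ ≤ (1 + t⁻¹)⁻¹ := inv_anti₀ (by linarith) (by linarith)
      linarith
    · have h1 : (1 + t⁻¹)⁻¹ < 1 := by rw [inv_lt_one_iff₀]; right; linarith
      linarith
  have hsig_surj : ∀ s ∈ Set.Ico ((a:ℝ) - 1 + (1 + (a:ℝ)⁻¹)⁻¹) (a:ℝ),
      ∃ t : ℝ, (a:ℝ) ≤ t ∧ (a:ℝ) - 1 + (1 + t⁻¹)⁻¹ = s := by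
    intro s hs
    set u : ℝ := s - ((a:ℝ) - 1) with hu
    have hv0 : (0:ℝ) < (1 + (a:ℝ)⁻¹)⁻¹ := by positivity
    have hu0 : (1 + (a:ℝ)⁻¹)⁻¹ ≤ u := by
      have := hs.1; rw [hu]; linarith
    have hu1 : u < 1 := by
      have := hs.2; rw [hu]; linarith
    have hu0' : (0:ℝ) < u := lt_of_lt_of_le hv0 hu0
    have hiu : 1 < u⁻¹ := (one_lt_inv₀ hu0').2 hu1
    have hks : 0 < u⁻¹ - 1 := by linarith
    refine ⟨(u⁻¹ - 1)⁻¹, ?_, ?_⟩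
    · have h1 : u⁻¹ ≤ ((1 + (a:ℝ)⁻¹)⁻¹)⁻¹ := inv_anti₀ hv0 hu0
      rw [inv_inv] at h1
      have h2 : u⁻¹ - 1 ≤ (a:ℝ)⁻¹ := by linarith
      have h3 := inv_anti₀ hks h2
      rwa [inv_inv] at h3
    · rw [inv_inv, show 1 + (u⁻¹ - 1) = u⁻¹ by ring, inv_inv, hu]; ring
  -- Claim A
  have claimA : ∀ t : ℝ, (a:ℝ) ≤ t →
      cfTail P t ∈ Set.Ico (0:ℝ) (a:ℝ) ∧ ra a (cfTail P t) = (x:ℝ) := by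
    intro t hta
    have ht1 : 1 < t := lt_of_lt_of_le ha1 hta
    obtain ⟨hmap, hiter, hfr⟩ := forward ht1 P hPtail
    set y := cfTail P t with hy
    have hPdec : P = B 0 :: ((List.range n).map (fun j => B (j+1)) ++ [(a:ℤ)-1, 1]) := by
      rw [hP, hLdec]; rfl
    have hresttail : ∀ b ∈ (List.range n).map (fun j => B (j+1)) ++ [(a:ℤ)-1, 1], 1 ≤ b := by
      intro b hb
      rcases List.mem_append.1 hb with hb | hb
      · exact hLtail1 b hb
      · simp only [List.mem_cons, List.mem_singleton] at hb
        rcases hb with rfl | hb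
        · omega
        · simp at hb; omega
    have hz : 1 < cfTail ((List.range n).map (fun j => B (j+1)) ++ [(a:ℤ)-1, 1]) t :=
      cfTail_gt_one ht1 hresttail
    have hyform : y = (B 0 : ℝ) + (cfTail ((List.range n).map (fun j => B (j+1)) ++ [(a:ℤ)-1, 1]) t)⁻¹ := by
      rw [hy, hPdec]; rfl
    have hzi0 : (0:ℝ) < (cfTail ((List.range n).map (fun j => B (j+1)) ++ [(a:ℤ)-1, 1]) t)⁻¹ := by
      positivity
    have hzi1 : (cfTail ((List.range n).map (fun j => B (j+1)) ++ [(a:ℤ)-1, 1]) t)⁻¹ < 1 := by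
      rw [inv_lt_one_iff₀]; right; exact hz
    have hB0R : (0:ℝ) ≤ (B 0 : ℝ) := by exact_mod_cast hB0
    have hB0aR : (B 0 : ℝ) + 1 ≤ (a:ℝ) := by
      have : (B 0 : ℤ) + 1 ≤ (a:ℤ) := by omega
      exact_mod_cast this
    have hmem : y ∈ Set.Ico (0:ℝ) (a:ℝ) := by
      constructor
      · rw [hyform]; linarith
      · rw [hyform]; linarith
    refine ⟨hmem, ?_⟩
    have hq3 : (a:ℤ) ≤ pquot y (n+3) := by
      rw [pquot, show cfIter y (n+3) = t by rw [← hPlen]; exact hiter]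
      exact Int.le_floor.2 (by exact_mod_cast hta)
    have hex : ∃ i, 1 ≤ i ∧ (a:ℤ) ≤ pquot y i := ⟨n+3, by omega, hq3⟩
    have hlt : ∀ i < n+3, pquot y i ≤ (a:ℤ) - 1 := by
      intro i hi
      have hmem' : pquot y i ∈ P := by
        rw [← hmap]
        exact List.mem_map_of_mem (List.mem_range.2 (by rw [hPlen]; omega))
      exact hPle _ hmem'
    rw [ra, dif_pos hex]
    have hfind : Nat.find hex = n + 3 := by
      rw [Nat.find_eq_iff]
      refine ⟨⟨by omega, hq3⟩, fun i hi hcon => ?_⟩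
      have := hlt i hi
      omega
    rw [hfind, show (List.range (n+3)).map (pquot y) = P by rw [← hPlen]; exact hmap, hPeval]
  -- Claim B
  have claimB : ∀ y : ℝ, y ∈ Set.Ico (0:ℝ) (a:ℝ) → ra a y = (x:ℝ) →
      ∃ t : ℝ, (a:ℝ) ≤ t ∧ cfTail P t = y := by
    intro y hmem hra
    have hexx : ∃ i, 1 ≤ i ∧ (a:ℤ) ≤ pquot (x:ℝ) i :=
      ⟨n+1, by omega, by rw [show pquot (x:ℝ) (n+1) = B (n+1) from hBq (n+1) le_rfl, hlast]⟩
    by_cases hex : ∃ i, 1 ≤ i ∧ (a:ℤ) ≤ pquot y i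
    swap
    · rw [ra, dif_neg hex] at hra
      subst hra
      exact absurd hexx hex
    · rw [ra, dif_pos hex] at hra
      set k := Nat.find hex with hk
      obtain ⟨hk1, hka⟩ := Nat.find_spec hex
      have hmin : ∀ i < k, ¬(1 ≤ i ∧ (a:ℤ) ≤ pquot y i) := fun i hi => Nat.find_min hex hi
      have hzero : ∀ i j, i ≤ j → cfIter y i = 0 → cfIter y j = 0 := by
        intro i j hij h0
        induction j with
        | zero => rw [show i = 0 by omega] at h0; exact h0
        | succ j ihj =>
          rcases Nat.lt_or_ge i (j+1) with h | h
          · have := ihj (by omega)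
            show cfStep _ = 0
            rw [this, cfStep, if_pos (by norm_num [Int.fract])]
          · rw [show i = j + 1 by omega] at h0; exact h0
      have hyk2 : (2:ℝ) ≤ cfIter y k := by
        have h1 : (2:ℤ) ≤ ⌊cfIter y k⌋ := le_trans ha2Z hka
        calc (2:ℝ) ≤ (⌊cfIter y k⌋ : ℝ) := by exact_mod_cast h1
          _ ≤ cfIter y k := Int.floor_le _
      have hfr : ∀ i < k, Int.fract (cfIter y i) ≠ 0 := by
        intro i hi hf
        have h0 : cfIter y (i+1) = 0 := by
          show cfStep _ = 0; rw [cfStep, if_pos hf]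
        have := hzero (i+1) k (by omega) h0
        rw [this] at hyk2; norm_num at hyk2
      have hgt : ∀ i, 1 ≤ i → i ≤ k → 1 < cfIter y i := by
        intro i h1 h2
        obtain ⟨j, rfl⟩ : ∃ j, i = j + 1 := ⟨i-1, by omega⟩
        have hf := hfr j (by omega)
        have hstep : cfIter y (j+1) = (Int.fract (cfIter y j))⁻¹ := by
          show cfStep _ = _; rw [cfStep, if_neg hf]
        rw [hstep]
        have h01 : 0 < Int.fract (cfIter y j) :=
          lt_of_le_of_ne (Int.fract_nonneg _) (Ne.symm hf)
        exact (one_lt_inv₀ h01).2 (Int.fract_lt_one _)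
      have htk : (a:ℝ) ≤ cfIter y k := by
        calc (a:ℝ) ≤ (⌊cfIter y k⌋ : ℝ) := by exact_mod_cast hka
          _ ≤ cfIter y k := Int.floor_le _
      set M := (List.range k).map (pquot y) with hM
      have hrec : cfTail M (cfIter y k) = y := reconstruct k y hfr
      have hMne : M ≠ [] := by
        rw [hM]; simp only [ne_eq, List.map_eq_nil_iff, List.range_eq_nil]; omega
      have hMlen : M.length = k := by rw [hM]; simp
      have hMtail : ∀ b ∈ M.tail, 1 ≤ b := by
        obtain ⟨k', hk'⟩ : ∃ k', k = k' + 1 := ⟨k-1, by omega⟩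
        rw [hM, hk', List.range_succ_eq_map, List.map_cons, List.map_map, List.tail_cons]
        intro b hb
        obtain ⟨j, hj, rfl⟩ := List.mem_map.1 hb
        have hjr := List.mem_range.1 hj
        show 1 ≤ pquot y (j+1)
        rw [pquot]
        exact Int.le_floor.2 (by exact_mod_cast (hgt (j+1) (by omega) (by omega)).le)
      have hLa_tail : ∀ b ∈ (L ++ [(a:ℤ)]).tail, 1 ≤ b := by
        rw [hLdec]
        intro b hb
        simp only [List.cons_append, List.tail_cons, List.mem_append] at hb
        rcases hb with hb | hb
        · exact hLtail1 b hb
        · simp at hb; omega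
      have hEvalLa : cfEval (L ++ [(a:ℤ)]) = (x:ℝ) := by
        rw [cfEval_append, ← hxrec]; norm_num
      have huniq := cf_uniq M (L ++ [(a:ℤ)]) hMne (by simp) hMtail hLa_tail
        (by rw [hEvalLa]; exact hra)
      rcases huniq with heq | ⟨l, m, hsp⟩
      · exfalso
        have hklen : k = n + 2 := by
          have := congrArg List.length heq
          rw [hMlen, List.length_append, hLlen] at this
          simpa using this
        have hlastM : M.getLast? = some (pquot y (n+1)) := by
          rw [hM, hklen, List.range_succ, List.map_append,
            show List.map (pquot y) [n+1] = [pquot y (n+1)] from rfl, List.getLast?_concat]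
        have hlastLa : (L ++ [(a:ℤ)]).getLast? = some (a:ℤ) := List.getLast?_concat
        rw [heq, hlastLa] at hlastM
        have : pquot y (n+1) = (a:ℤ) := by
          injection hlastM.symm
        exact hmin (n+1) (by omega) ⟨by omega, le_of_eq this.symm⟩
      · rcases hsp with ⟨h1, h2⟩ | ⟨h1, h2⟩
        · exfalso
          have e1 : (l ++ [m-1, 1]).getLast? = some 1 := by
            rw [show l ++ [m-1,1] = (l ++ [m-1]) ++ [1] by simp, List.getLast?_concat]
          rw [← h2, List.getLast?_concat] at e1
          have : (a:ℤ) = 1 := by injection e1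
          omega
        · obtain ⟨hl, hm⟩ := List.append_inj' h1 rfl
          have hm' : m = (a:ℤ) := by injection hm with h1' h2'; exact h1'.symm
          have hMP : M = P := by rw [h2, hm', hP, ← hl]
          exact ⟨cfIter y k, htk, by rw [← hMP]; exact hrec⟩
  -- Part 1
  have hexx : ∃ i, 1 ≤ i ∧ (a:ℤ) ≤ pquot (x:ℝ) i :=
    ⟨n+1, by omega, by rw [show pquot (x:ℝ) (n+1) = B (n+1) from hBq (n+1) le_rfl, hlast]⟩
  have hfindx : Nat.find hexx = n + 1 := by
    rw [Nat.find_eq_iff]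
    refine ⟨⟨by omega, by rw [show pquot (x:ℝ) (n+1) = B (n+1) from hBq (n+1) le_rfl, hlast]⟩,
      fun i hi hcon => ?_⟩
    obtain ⟨hi1, hia⟩ := hcon
    rw [show pquot (x:ℝ) i = B i from hBq i (by omega)] at hia
    have := hbd i (by omega)
    omega
  have part1 : ra a (x:ℝ) = cfEval L := by
    rw [ra, dif_pos hexx, hfindx, hmapL]
  -- Part 2
  have part2 : cfEval L ≠ (x:ℝ) := by
    have hdecomp : L = (List.range n).map B ++ [B n] := by
      rw [hL, List.range_succ, List.map_append]; rfl
    rw [hdecomp, cfEval_append, ← hxrec, hdecomp, cfTail_append]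
    intro hcontra
    have hBna : (0:ℝ) < (a:ℝ)⁻¹ := hainv
    cases n with
    | zero =>
      simp only [List.range_zero, List.map_nil] at hcontra
      have : (B 0 : ℝ) = (B 0 : ℝ) + (a:ℝ)⁻¹ := hcontra
      linarith
    | succ n' =>
      have htailn : ∀ b ∈ ((List.range (n'+1)).map B).tail, 1 ≤ b := by
        rw [List.range_succ_eq_map, List.map_cons, List.map_map, List.tail_cons]
        intro b hb
        obtain ⟨j, hj, rfl⟩ := List.mem_map.1 hb
        have := List.mem_range.1 hj
        exact hB1 (j+1) (by omega) (by omega)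
      have hBn1 : (1:ℝ) ≤ (B (n'+1) : ℝ) := by
        exact_mod_cast hB1 (n'+1) (by omega) (by omega)
      have hmono := cfTail_mono ((List.range (n'+1)).map B) htailn
        (s := (B (n'+1) : ℝ)) (t := (B (n'+1) : ℝ) + (a:ℝ)⁻¹) hBn1 (by linarith) (by linarith)
      by_cases hev : Even ((List.range (n'+1)).map B).length
      · have := hmono.1 hev; rw [hcontra] at this; exact lt_irrefl _ this
      · have := hmono.2 hev; rw [hcontra] at this; exact lt_irrefl _ this
  refine ⟨part1, by rw [part1]; exact part2, ?_⟩
  -- Part 3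
  have hcont : ContinuousOn (fun s => cfTail L s) (Set.Icc ((a:ℝ) - 1 + (1 + (a:ℝ)⁻¹)⁻¹) (a:ℝ)) :=
    (cfTail_continuousOn L hLtail).mono (fun s hs => le_trans hc1.le hs.1)
  have hSub : {y | y ∈ Set.Ico (0:ℝ) (a:ℝ) ∧ ra a y = (x:ℝ)} ⊆
      (fun s => cfTail L s) '' Set.Ico ((a:ℝ) - 1 + (1 + (a:ℝ)⁻¹)⁻¹) (a:ℝ) := by
    intro y hy
    obtain ⟨t, hta, hty⟩ := claimB y hy.1 hy.2
    refine ⟨(a:ℝ) - 1 + (1 + t⁻¹)⁻¹, hsig_mem t hta, ?_⟩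
    show cfTail L ((a:ℝ) - 1 + (1 + t⁻¹)⁻¹) = y
    rw [← hPval t]; exact hty
  have hSup : (fun s => cfTail L s) '' Set.Ico ((a:ℝ) - 1 + (1 + (a:ℝ)⁻¹)⁻¹) (a:ℝ) ⊆
      {y | y ∈ Set.Ico (0:ℝ) (a:ℝ) ∧ ra a y = (x:ℝ)} := by
    rintro y ⟨s, hs, rfl⟩
    obtain ⟨t, hta, hts⟩ := hsig_surj s hs
    have heq : cfTail P t = cfTail L s := by rw [hPval t, hts]
    show cfTail L s ∈ Set.Ico (0:ℝ) (a:ℝ) ∧ ra a (cfTail L s) = (x:ℝ)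
    rw [← heq]
    exact ⟨(claimA t hta).1, (claimA t hta).2⟩
  have hSeq : {y | y ∈ Set.Ico (0:ℝ) (a:ℝ) ∧ ra a y = (x:ℝ)} =
      (fun s => cfTail L s) '' Set.Ico ((a:ℝ) - 1 + (1 + (a:ℝ)⁻¹)⁻¹) (a:ℝ) := Set.Subset.antisymm hSub hSup
  by_cases hev : Even L.length
  · -- increasing: zone = Ico w x
    right
    have hwx : w < (x:ℝ) := by
      rw [hwc, hxd]
      exact ((cfTail_mono L hLtail) hc1.le hd1 hcd).1 hev
    refine ⟨hwx, ?_⟩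
    rw [hSeq]
    apply Set.Subset.antisymm
    · rintro y ⟨s, hs, rfl⟩
      constructor
      · rw [hwc]
        rcases eq_or_lt_of_le hs.1 with heq | hlt
        · rw [heq]
        · exact (((cfTail_mono L hLtail) hc1.le (le_trans hc1.le hlt.le) hlt).1 hev).le
      · rw [hxd]
        exact ((cfTail_mono L hLtail) (le_trans hc1.le hs.1) hd1 hs.2).1 hev
    · rw [hwc, hxd]
      exact intermediate_value_Ico hcd.le hcont
  · -- decreasing: zone = Ioc x w
    left
    have hwx : (x:ℝ) < w := by
      rw [hwc, hxd]
      exact ((cfTail_mono L hLtail) hc1.le hd1 hcd).2 hev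
    refine ⟨hwx, ?_⟩
    rw [hSeq]
    apply Set.Subset.antisymm
    · rintro y ⟨s, hs, rfl⟩
      constructor
      · rw [hxd]
        exact ((cfTail_mono L hLtail) (le_trans hc1.le hs.1) hd1 hs.2).2 hev
      · rw [hwc]
        rcases eq_or_lt_of_le hs.1 with heq | hlt
        · rw [heq]
        · exact (((cfTail_mono L hLtail) hc1.le (le_trans hc1.le hlt.le) hlt).2 hev).le
    · rw [hwc, hxd]
      exact intermediate_value_Ico' hcd.le hcont
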